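/- Let N be a weakly classical 1-absorbing prime submodule of M and suppose there exists a classical 1-quadruple-zero (a, b, c, m) of N such that acm ∉ N and bcm ∉ N. Then (N :_R M)³N = 0, i.e., xyzn = 0 for all x, y, z ∈ (N :_R M) and all n ∈ N; in particular N is a nilpotent submodule of M. -/
import Mathlib


/-- A proper submodule `N` of `M` is weakly classical 1-absorbing prime if whenever
`abcm ∈ N` and `abcm ≠ 0` for nonunits `a, b, c ∈ R` and `m ∈ M`, then `abm ∈ N` or `cm ∈ N`. -/
def IsWeaklyClassical1AbsorbingPrime {R : Type*} [CommRing R] {M : Type*} [AddCommGroup M]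
    [Module R M] (N : Submodule R M) : Prop :=
  N ≠ ⊤ ∧ ∀ a b c : R, ∀ m : M, ¬ IsUnit a → ¬ IsUnit b → ¬ IsUnit c →
    (a * b * c) • m ∈ N → (a * b * c) • m ≠ 0 → ((a * b) • m ∈ N ∨ c • m ∈ N)

/-- A proper ideal `I` of `R` is weakly 1-absorbing prime if whenever `abc ∈ I` and
`abc ≠ 0` for nonunits `a, b, c ∈ R`, then `ab ∈ I` or `c ∈ I`. -/
def IsWeakly1AbsorbingPrimeIdeal {R : Type*} [CommRing R] (I : Ideal R) : Prop :=
  I ≠ ⊤ ∧ ∀ a b c : R, ¬ IsUnit a → ¬ IsUnit b → ¬ IsUnit c →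
    a * b * c ∈ I → a * b * c ≠ 0 → (a * b ∈ I ∨ c ∈ I)

/-- For nonunits `a, b, c ∈ R` and `m ∈ M`, the tuple `(a, b, c, m)` is a classical
1-quadruple-zero of `N` if `abcm = 0`, `abm ∉ N` and `cm ∉ N`. -/
def IsClassical1QuadrupleZero {R : Type*} [CommRing R] {M : Type*} [AddCommGroup M]
    [Module R M] (N : Submodule R M) (a b c : R) (m : M) : Prop :=
  ¬ IsUnit a ∧ ¬ IsUnit b ∧ ¬ IsUnit c ∧ (a * b * c) • m = 0 ∧
    (a * b) • m ∉ N ∧ c • m ∉ N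

/-- If `N` is weakly classical 1-absorbing prime and there exists a
classical 1-quadruple-zero `(a, b, c, m)` of `N` with `acm ∉ N` and `bcm ∉ N`, then
`(N :_R M)³N = 0`; in particular `N` is a nilpotent submodule of `M`. -/
theorem stmt_15 {R : Type*} [CommRing R] [Nontrivial R] {M : Type*} [AddCommGroup M]
    [Module R M] [Nontrivial M] (N : Submodule R M)
    (hN : IsWeaklyClassical1AbsorbingPrime N)
    (hquad : ∃ (a b c : R) (m : M), IsClassical1QuadrupleZero N a b c m ∧
      (a * c) • m ∉ N ∧ (b * c) • m ∉ N) :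
    (∀ x ∈ N.colon ⊤, ∀ y ∈ N.colon ⊤, ∀ z ∈ N.colon ⊤, ∀ n ∈ N, (x * y * z) • n = 0) ∧
      ∃ k : ℕ, 0 < k ∧ (N.colon ⊤) ^ k • N = ⊥ := by
  obtain ⟨a, b, c, m, ⟨ha, hb, hc, habc0, habm, hcm⟩, hacm, hbcm⟩ := hquad
  obtain ⟨hNtop, hNw⟩ := hN
  set I := N.colon (⊤ : Submodule R M) with hI
  have hcol : ∀ x ∈ I, ∀ v : M, x • v ∈ N := fun x hx v =>
    Submodule.mem_colon.mp hx v Submodule.mem_top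
  have peel : ∀ (u r : R) (v : M), IsUnit u → (u * r) • v ∈ N → r • v ∈ N := by
    intro u r v hu h
    have h2 := N.smul_mem (↑hu.unit⁻¹ : R) h
    rwa [← mul_smul, ← mul_assoc, hu.val_inv_mul, one_mul] at h2
  have Ec : ∀ z ∈ I, ∀ n ∈ N, (c + z) • (m + n) ∈ N → c • m ∈ N := by
    intro z hz n hn h
    have key : c • m = (c + z) • (m + n) - (c • n + z • (m + n)) := by module
    rw [key]
    exact Submodule.sub_mem _ h (Submodule.add_mem _ (N.smul_mem c hn) (hcol z hz _))
  have Eab : ∀ x ∈ I, ∀ y ∈ I, ∀ n ∈ N,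
      ((a + x) * (b + y)) • (m + n) ∈ N → (a * b) • m ∈ N := by
    intro x hx y hy n hn h
    have key : (a * b) • m = ((a + x) * (b + y)) • (m + n) -
        ((a * b) • n + (y * a) • (m + n) + (x * (b + y)) • (m + n)) := by module
    rw [key]
    refine Submodule.sub_mem _ h (Submodule.add_mem _ (Submodule.add_mem _
      (N.smul_mem _ hn) ?_) ?_)
    · rw [mul_smul]; exact hcol y hy _
    · rw [mul_smul]; exact hcol x hx _
  have Eac : ∀ x ∈ I, ∀ z ∈ I, ∀ n ∈ N,
      ((a + x) * (c + z)) • (m + n) ∈ N → (a * c) • m ∈ N := by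
    intro x hx z hz n hn h
    have key : (a * c) • m = ((a + x) * (c + z)) • (m + n) -
        ((a * c) • n + (z * a) • (m + n) + (x * (c + z)) • (m + n)) := by module
    rw [key]
    refine Submodule.sub_mem _ h (Submodule.add_mem _ (Submodule.add_mem _
      (N.smul_mem _ hn) ?_) ?_)
    · rw [mul_smul]; exact hcol z hz _
    · rw [mul_smul]; exact hcol x hx _
  have Ebc : ∀ y ∈ I, ∀ z ∈ I, ∀ n ∈ N,
      ((b + y) * (c + z)) • (m + n) ∈ N → (b * c) • m ∈ N := by
    intro y hy z hz n hn h
    have key : (b * c) • m = ((b + y) * (c + z)) • (m + n) -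
        ((b * c) • n + (z * b) • (m + n) + (y * (c + z)) • (m + n)) := by module
    rw [key]
    refine Submodule.sub_mem _ h (Submodule.add_mem _ (Submodule.add_mem _
      (N.smul_mem _ hn) ?_) ?_)
    · rw [mul_smul]; exact hcol z hz _
    · rw [mul_smul]; exact hcol y hy _
  have P1 : ∀ n ∈ N, (a * b * c) • (m + n) = 0 := by
    intro n hn
    by_contra hne
    have hmem : (a * b * c) • (m + n) ∈ N := by
      rw [smul_add, habc0, zero_add]; exact N.smul_mem _ hn
    rcases hNw a b c (m + n) ha hb hc hmem hne with h | h
    · exact habm (Eab 0 I.zero_mem 0 I.zero_mem n hn (by simpa using h))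
    · exact hcm (Ec 0 I.zero_mem n hn (by simpa using h))
  have P2 : ∀ z ∈ I, ∀ n ∈ N, (a * b * z) • (m + n) = 0 := by
    intro z hz n hn
    by_contra hne
    have hmem : (a * b * z) • (m + n) ∈ N := by
      rw [show a * b * z = z * (a * b) by ring, mul_smul]; exact hcol z hz _
    have key : (a * b * (c + z)) • (m + n) = (a * b * c) • (m + n) + (a * b * z) • (m + n) := by
      module
    rw [P1 n hn, zero_add] at key
    by_cases hu : IsUnit (c + z)
    · refine habm (Eab 0 I.zero_mem 0 I.zero_mem n hn ?_)
      have := peel (c + z) (a * b) (m + n) hu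
        (by rw [show (c + z) * (a * b) = a * b * (c + z) by ring, key]; exact hmem)
      simpa using this
    · rcases hNw a b (c + z) (m + n) ha hb hu (by rw [key]; exact hmem)
        (by rw [key]; exact hne) with h | h
      · exact habm (Eab 0 I.zero_mem 0 I.zero_mem n hn (by simpa using h))
      · exact hcm (Ec z hz n hn h)
  have P3 : ∀ y ∈ I, ∀ n ∈ N, (a * y * c) • (m + n) = 0 := by
    intro y hy n hn
    by_contra hne
    have hmem : (a * y * c) • (m + n) ∈ N := by
      rw [show a * y * c = y * (a * c) by ring, mul_smul]; exact hcol y hy _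
    have key : (a * (b + y) * c) • (m + n) = (a * b * c) • (m + n) + (a * y * c) • (m + n) := by
      module
    rw [P1 n hn, zero_add] at key
    by_cases hu : IsUnit (b + y)
    · refine hacm (Eac 0 I.zero_mem 0 I.zero_mem n hn ?_)
      have := peel (b + y) (a * c) (m + n) hu
        (by rw [show (b + y) * (a * c) = a * (b + y) * c by ring, key]; exact hmem)
      simpa using this
    · rcases hNw a (b + y) c (m + n) ha hu hc (by rw [key]; exact hmem)
        (by rw [key]; exact hne) with h | h
      · exact habm (Eab 0 I.zero_mem y hy n hn (by simpa using h))
      · exact hcm (Ec 0 I.zero_mem n hn (by simpa using h))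
  have P4 : ∀ x ∈ I, ∀ n ∈ N, (x * b * c) • (m + n) = 0 := by
    intro x hx n hn
    by_contra hne
    have hmem : (x * b * c) • (m + n) ∈ N := by
      rw [show x * b * c = x * (b * c) by ring, mul_smul]; exact hcol x hx _
    have key : ((a + x) * b * c) • (m + n) = (a * b * c) • (m + n) + (x * b * c) • (m + n) := by
      module
    rw [P1 n hn, zero_add] at key
    by_cases hu : IsUnit (a + x)
    · refine hbcm (Ebc 0 I.zero_mem 0 I.zero_mem n hn ?_)
      have := peel (a + x) (b * c) (m + n) hu
        (by rw [show (a + x) * (b * c) = (a + x) * b * c by ring, key]; exact hmem)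
      simpa using this
    · rcases hNw (a + x) b c (m + n) hu hb hc (by rw [key]; exact hmem)
        (by rw [key]; exact hne) with h | h
      · exact habm (Eab x hx 0 I.zero_mem n hn (by simpa using h))
      · exact hcm (Ec 0 I.zero_mem n hn (by simpa using h))
  have P5 : ∀ x ∈ I, ∀ y ∈ I, ∀ n ∈ N, (x * y * c) • (m + n) = 0 := by
    intro x hx y hy n hn
    by_contra hne
    have hmem : (x * y * c) • (m + n) ∈ N := by
      rw [show x * y * c = x * (y * c) by ring, mul_smul]; exact hcol x hx _
    have key : ((a + x) * (b + y) * c) • (m + n) = (a * b * c) • (m + n) +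
        (a * y * c) • (m + n) + (x * b * c) • (m + n) + (x * y * c) • (m + n) := by module
    rw [P1 n hn, P3 y hy n hn, P4 x hx n hn, zero_add, zero_add, zero_add] at key
    by_cases hu1 : IsUnit (a + x)
    · refine hbcm (Ebc y hy 0 I.zero_mem n hn ?_)
      have := peel (a + x) ((b + y) * c) (m + n) hu1
        (by rw [show (a + x) * ((b + y) * c) = (a + x) * (b + y) * c by ring, key]; exact hmem)
      simpa using this
    by_cases hu2 : IsUnit (b + y)
    · refine hacm (Eac x hx 0 I.zero_mem n hn ?_)
      have := peel (b + y) ((a + x) * c) (m + n) hu2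
        (by rw [show (b + y) * ((a + x) * c) = (a + x) * (b + y) * c by ring, key]; exact hmem)
      simpa using this
    rcases hNw (a + x) (b + y) c (m + n) hu1 hu2 hc (by rw [key]; exact hmem)
      (by rw [key]; exact hne) with h | h
    · exact habm (Eab x hx y hy n hn h)
    · exact hcm (Ec 0 I.zero_mem n hn (by simpa using h))
  have P6 : ∀ y ∈ I, ∀ z ∈ I, ∀ n ∈ N, (a * y * z) • (m + n) = 0 := by
    intro y hy z hz n hn
    by_contra hne
    have hmem : (a * y * z) • (m + n) ∈ N := by
      rw [show a * y * z = y * (a * z) by ring, mul_smul]; exact hcol y hy _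
    have key : (a * (b + y) * (c + z)) • (m + n) = (a * b * c) • (m + n) +
        (a * b * z) • (m + n) + (a * y * c) • (m + n) + (a * y * z) • (m + n) := by module
    rw [P1 n hn, P2 z hz n hn, P3 y hy n hn, zero_add, zero_add, zero_add] at key
    by_cases hu1 : IsUnit (b + y)
    · refine hacm (Eac 0 I.zero_mem z hz n hn ?_)
      have := peel (b + y) (a * (c + z)) (m + n) hu1
        (by rw [show (b + y) * (a * (c + z)) = a * (b + y) * (c + z) by ring, key]; exact hmem)
      simpa using this
    by_cases hu2 : IsUnit (c + z)
    · refine habm (Eab 0 I.zero_mem y hy n hn ?_)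
      have := peel (c + z) (a * (b + y)) (m + n) hu2
        (by rw [show (c + z) * (a * (b + y)) = a * (b + y) * (c + z) by ring, key]; exact hmem)
      simpa using this
    rcases hNw a (b + y) (c + z) (m + n) ha hu1 hu2 (by rw [key]; exact hmem)
      (by rw [key]; exact hne) with h | h
    · exact habm (Eab 0 I.zero_mem y hy n hn (by simpa using h))
    · exact hcm (Ec z hz n hn h)
  have P7 : ∀ x ∈ I, ∀ z ∈ I, ∀ n ∈ N, (x * b * z) • (m + n) = 0 := by
    intro x hx z hz n hn
    by_contra hne
    have hmem : (x * b * z) • (m + n) ∈ N := by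
      rw [show x * b * z = x * (b * z) by ring, mul_smul]; exact hcol x hx _
    have key : ((a + x) * b * (c + z)) • (m + n) = (a * b * c) • (m + n) +
        (a * b * z) • (m + n) + (x * b * c) • (m + n) + (x * b * z) • (m + n) := by module
    rw [P1 n hn, P2 z hz n hn, P4 x hx n hn, zero_add, zero_add, zero_add] at key
    by_cases hu1 : IsUnit (a + x)
    · refine hbcm (Ebc 0 I.zero_mem z hz n hn ?_)
      have := peel (a + x) (b * (c + z)) (m + n) hu1
        (by rw [show (a + x) * (b * (c + z)) = (a + x) * b * (c + z) by ring, key]; exact hmem)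
      simpa using this
    by_cases hu2 : IsUnit (c + z)
    · refine habm (Eab x hx 0 I.zero_mem n hn ?_)
      have := peel (c + z) ((a + x) * b) (m + n) hu2
        (by rw [show (c + z) * ((a + x) * b) = (a + x) * b * (c + z) by ring, key]; exact hmem)
      simpa using this
    rcases hNw (a + x) b (c + z) (m + n) hu1 hb hu2 (by rw [key]; exact hmem)
      (by rw [key]; exact hne) with h | h
    · exact habm (Eab x hx 0 I.zero_mem n hn (by simpa using h))
    · exact hcm (Ec z hz n hn h)
  have P8 : ∀ x ∈ I, ∀ y ∈ I, ∀ z ∈ I, ∀ n ∈ N, (x * y * z) • (m + n) = 0 := by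
    intro x hx y hy z hz n hn
    by_contra hne
    have hmem : (x * y * z) • (m + n) ∈ N := by
      rw [show x * y * z = x * (y * z) by ring, mul_smul]; exact hcol x hx _
    have key : ((a + x) * (b + y) * (c + z)) • (m + n) = (a * b * c) • (m + n) +
        (a * b * z) • (m + n) + (a * y * c) • (m + n) + (a * y * z) • (m + n) +
        (x * b * c) • (m + n) + (x * b * z) • (m + n) + (x * y * c) • (m + n) +
        (x * y * z) • (m + n) := by module
    rw [P1 n hn, P2 z hz n hn, P3 y hy n hn, P4 x hx n hn, P5 x hx y hy n hn,
      P6 y hy z hz n hn, P7 x hx z hz n hn] at key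
    simp only [zero_add] at key
    by_cases hu1 : IsUnit (a + x)
    · refine hbcm (Ebc y hy z hz n hn ?_)
      exact peel (a + x) ((b + y) * (c + z)) (m + n) hu1
        (by rw [show (a + x) * ((b + y) * (c + z)) = (a + x) * (b + y) * (c + z) by ring, key]
            exact hmem)
    by_cases hu2 : IsUnit (b + y)
    · refine hacm (Eac x hx z hz n hn ?_)
      exact peel (b + y) ((a + x) * (c + z)) (m + n) hu2
        (by rw [show (b + y) * ((a + x) * (c + z)) = (a + x) * (b + y) * (c + z) by ring, key]
            exact hmem)
    by_cases hu3 : IsUnit (c + z)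
    · refine habm (Eab x hx y hy n hn ?_)
      exact peel (c + z) ((a + x) * (b + y)) (m + n) hu3
        (by rw [show (c + z) * ((a + x) * (b + y)) = (a + x) * (b + y) * (c + z) by ring, key]
            exact hmem)
    rcases hNw (a + x) (b + y) (c + z) (m + n) hu1 hu2 hu3 (by rw [key]; exact hmem)
      (by rw [key]; exact hne) with h | h
    · exact habm (Eab x hx y hy n hn h)
    · exact hcm (Ec z hz n hn h)
  have main : ∀ x ∈ I, ∀ y ∈ I, ∀ z ∈ I, ∀ n ∈ N, (x * y * z) • n = 0 := by
    intro x hx y hy z hz n hn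
    have h1 := P8 x hx y hy z hz n hn
    have h2 := P8 x hx y hy z hz 0 N.zero_mem
    have key : (x * y * z) • n = (x * y * z) • (m + n) - (x * y * z) • (m + 0) := by module
    rw [key, h1, h2, sub_zero]
  refine ⟨main, 3, by norm_num, ?_⟩
  have hann : I ^ 3 ≤ N.annihilator := by
    have h3 : I ^ 3 = I * I * I := by rw [pow_succ, pow_succ, pow_one]
    rw [h3]
    refine Ideal.mul_le.2 fun r hr s hs => ?_
    refine Submodule.mul_induction_on hr (fun x hx y hy => ?_) (fun r1 r2 h1 h2 => ?_)
    · exact Submodule.mem_annihilator.2 fun n hn => main x hx y hy s hs n hn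
    · rw [add_mul]; exact N.annihilator.add_mem h1 h2
  refine le_bot_iff.mp (Submodule.smul_le.2 fun r hr n hn => ?_)
  exact (Submodule.mem_bot R).2 (Submodule.mem_annihilator.1 (hann hr) n hn)
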